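/- Completeness of the Boolean translation: if M = (⟨T,T⟩, τ) is a metric equilibrium model of a metric logic program P of length λ, then θ(M) is an equilibrium model of Π_λ(P) ∪ Δ_{λ,ν} ∪ Ψ_{λ,ν}(P), where ν = τ(λ−1). -/
import Mathlib


/-! ### Propositional Here-and-There -/

inductive HTForm (α : Type) : Type
  | bot : HTForm α
  | atom : α → HTForm α
  | and : HTForm α → HTForm α → HTForm α
  | or : HTForm α → HTForm α → HTForm α
  | imp : HTForm α → HTForm α → HTForm α

/-- HT satisfaction `⟨H,T⟩ ⊨ φ`. -/
def HTSat {α : Type} : Set α → Set α → HTForm α → Prop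
  | _, _, .bot => False
  | H, _, .atom a => a ∈ H
  | H, T, .and φ ψ => HTSat H T φ ∧ HTSat H T ψ
  | H, T, .or φ ψ => HTSat H T φ ∨ HTSat H T ψ
  | H, T, .imp φ ψ => (HTSat H T φ → HTSat H T ψ) ∧ (HTSat T T φ → HTSat T T ψ)

/-- Classical satisfaction. -/
def ClSat {α : Type} : Set α → HTForm α → Prop
  | _, .bot => False
  | T, .atom a => a ∈ T
  | T, .and φ ψ => ClSat T φ ∧ ClSat T ψ
  | T, .or φ ψ => ClSat T φ ∨ ClSat T ψ
  | T, .imp φ ψ => ClSat T φ → ClSat T ψ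

def HTModel {α : Type} (H T : Set α) (Γ : Set (HTForm α)) : Prop :=
  ∀ φ ∈ Γ, HTSat H T φ

/-- Equilibrium model: total HT-model minimal in the here-component. -/
def EqModel {α : Type} (T : Set α) (Γ : Set (HTForm α)) : Prop :=
  HTModel T T Γ ∧ ∀ H : Set α, H ⊆ T → HTModel H T Γ → H = T

def hneg {α : Type} (φ : HTForm α) : HTForm α := .imp φ .bot
def hTop {α : Type} : HTForm α := hneg .bot
def hconj {α : Type} (l : List (HTForm α)) : HTForm α := l.foldr .and hTop
def hdisj {α : Type} (l : List (HTForm α)) : HTForm α := l.foldr .or .bot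

/-! ### Timing functions -/

/-- A (strict) timing function wrt `lam`: `τ 0 = 0` and `τ` strictly increasing on `[0, lam)`. -/
def TimingFn (lam : ℕ) (τ : ℕ → ℕ) : Prop :=
  τ 0 = 0 ∧ ∀ k, k + 1 < lam → τ k < τ (k + 1)

/-! ### Metric formulas and MHT satisfaction -/

inductive MForm (α : Type) : Type
  | bot : MForm α
  | atom : α → MForm α
  | and : MForm α → MForm α → MForm α
  | or : MForm α → MForm α → MForm α
  | imp : MForm α → MForm α → MForm α
  | init : MForm α
  | next : ℕ → Option ℕ → MForm α → MForm α
  | always : ℕ → Option ℕ → MForm α → MForm α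
  | event : ℕ → Option ℕ → MForm α → MForm α

/-- Membership `d ∈ [m, n)` with `n ∈ ℕ ∪ {ω}` (`none` = ω). -/
def inI (m : ℕ) (n : Option ℕ) (d : ℕ) : Prop :=
  m ≤ d ∧ ∀ n', n = some n' → d < n'

/-- MHT satisfaction over a timed HT-trace of length `lam` given by `H T : ℕ → Set α` and `τ`. -/
def MSat {α : Type} (lam : ℕ) : (ℕ → Set α) → (ℕ → Set α) → (ℕ → ℕ) → ℕ → MForm α → Prop
  | _, _, _, _, .bot => False
  | H, _, _, k, .atom a => a ∈ H k
  | H, T, τ, k, .and φ ψ => MSat lam H T τ k φ ∧ MSat lam H T τ k ψ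
  | H, T, τ, k, .or φ ψ => MSat lam H T τ k φ ∨ MSat lam H T τ k ψ
  | H, T, τ, k, .imp φ ψ =>
      (MSat lam H T τ k φ → MSat lam H T τ k ψ) ∧
      (MSat lam T T τ k φ → MSat lam T T τ k ψ)
  | _, _, _, k, .init => k = 0
  | H, T, τ, k, .next m n φ =>
      k + 1 < lam ∧ MSat lam H T τ (k + 1) φ ∧ inI m n (τ (k + 1) - τ k)
  | H, T, τ, k, .event m n φ =>
      ∃ i, k ≤ i ∧ i < lam ∧ inI m n (τ i - τ k) ∧ MSat lam H T τ i φ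
  | H, T, τ, k, .always m n φ =>
      ∀ i, k ≤ i → i < lam → inI m n (τ i - τ k) → MSat lam H T τ i φ

def mneg {α : Type} (φ : MForm α) : MForm α := .imp φ .bot
def mTop {α : Type} : MForm α := mneg .bot
def mconj {α : Type} (l : List (MForm α)) : MForm α := l.foldr .and mTop
def mdisj {α : Type} (l : List (MForm α)) : MForm α := l.foldr .or .bot

/-! ### The Boolean timing program Δ_{λ,ν} -/

/-- `bigOr`/`deltaRule`/`DeltaB` over atoms embedded via `f : ℕ × ℕ → β`
(`f (k,d)` plays the role of the atom `t_{k,d}`). -/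
def deltaRule {β : Type} (f : ℕ × ℕ → β) (k d ν : ℕ) : HTForm β :=
  .imp (.atom (f (k, d)))
    (hdisj (((List.range (ν + 1)).filter (fun d' => decide (d < d'))).map
      (fun d' => .atom (f (k + 1, d')))))

def DeltaB {β : Type} (f : ℕ × ℕ → β) (lam ν : ℕ) : Set (HTForm β) :=
  {HTForm.atom (f (0, 0))} ∪
  {r | ∃ k d, k + 1 < lam ∧ d ≤ ν ∧ r = deltaRule f k d ν}

/-- `⟨H,T⟩` is timed wrt `lam` with timing function `τ`:
`t_{k,d} ∈ H ↔ τ k = d` and `t_{k,d} ∈ T ↔ τ k = d` for all `k < lam`. -/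
def TimedHT {β : Type} (f : ℕ × ℕ → β) (lam : ℕ) (H T : Set β) (τ : ℕ → ℕ) : Prop :=
  TimingFn lam τ ∧
  ∀ k, k < lam → ∀ d, ((f (k, d) ∈ H) ↔ τ k = d) ∧ ((f (k, d) ∈ T) ↔ τ k = d)

/-! ### HT_c with difference constraints (simple signature) -/

abbrev CVal (V : Type) := V → Option ℕ

def CValLe {V : Type} (h t : CVal V) : Prop := ∀ x d, h x = some d → t x = some d

inductive CForm (V : Type) : Type
  | bot : CForm V
  | eqC : V → ℕ → CForm V
  | diff : V → V → ℤ → CForm V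
  | and : CForm V → CForm V → CForm V
  | or : CForm V → CForm V → CForm V
  | imp : CForm V → CForm V → CForm V

def CSat {V : Type} : CVal V → CVal V → CForm V → Prop
  | _, _, .bot => False
  | h, _, .eqC x d => h x = some d
  | h, _, .diff x y d => ∃ a b : ℕ, h x = some a ∧ h y = some b ∧ (a : ℤ) - b ≤ d
  | h, t, .and φ ψ => CSat h t φ ∧ CSat h t ψ
  | h, t, .or φ ψ => CSat h t φ ∨ CSat h t ψ
  | h, t, .imp φ ψ => (CSat h t φ → CSat h t ψ) ∧ (CSat t t φ → CSat t t ψ)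

def CModel {V : Type} (h t : CVal V) (Γ : Set (CForm V)) : Prop := ∀ φ ∈ Γ, CSat h t φ

/-- Δ^c_λ over integer variables `t_0, …, t_{λ-1}` (variables are indices in ℕ). -/
def DeltaC (lam : ℕ) : Set (CForm ℕ) :=
  {CForm.eqC 0 0} ∪ {r | ∃ k, k + 1 < lam ∧ r = CForm.diff k (k + 1) (-1)}

/-- `⟨h,t⟩` is timed wrt `lam`. -/
def TimedC (lam : ℕ) (h t : CVal ℕ) : Prop :=
  ∃ τ : ℕ → ℕ, TimingFn lam τ ∧ ∀ k, k < lam → h k = some (τ k) ∧ t k = some (τ k)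

/-! ### Timed traces and the bijection θ/σ -/

abbrev TAtom (α : Type) := (α × ℕ) ⊕ (ℕ × ℕ)

/-- A trace candidate: here-states, there-states and a timing function. -/
abbrev TraceC (α : Type) := (ℕ → Set α) × (ℕ → Set α) × (ℕ → ℕ)

/-- Timed HT-trace of length `lam` (normalized beyond `lam`). -/
def IsTTrace {α : Type} (lam : ℕ) (M : TraceC α) : Prop :=
  (∀ k, M.1 k ⊆ M.2.1 k) ∧ TimingFn lam M.2.2 ∧
  (∀ k, lam ≤ k → M.1 k = ∅ ∧ M.2.1 k = ∅ ∧ M.2.2 k = 0)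

def thetaMap {α : Type} (lam : ℕ) (M : TraceC α) : Set (TAtom α) × Set (TAtom α) :=
  ({x | (∃ a k, k < lam ∧ a ∈ M.1 k ∧ x = Sum.inl (a, k)) ∨
        (∃ k, k < lam ∧ x = Sum.inr (k, M.2.2 k))},
   {x | (∃ a k, k < lam ∧ a ∈ M.2.1 k ∧ x = Sum.inl (a, k)) ∨
        (∃ k, k < lam ∧ x = Sum.inr (k, M.2.2 k))})

/-- HT-interpretations over `A* ∪ T` timed wrt `lam`. -/
def TimedInterp (α : Type) (lam : ℕ) : Set (Set (TAtom α) × Set (TAtom α)) :=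
  {p | p.1 ⊆ p.2 ∧ (∀ a k, Sum.inl (a, k) ∈ p.2 → k < lam) ∧
    ∃ τ : ℕ → ℕ, TimingFn lam τ ∧
      ∀ k d, (Sum.inr (k, d) ∈ p.1 ↔ (k < lam ∧ τ k = d)) ∧
             (Sum.inr (k, d) ∈ p.2 ↔ (k < lam ∧ τ k = d))}

def sigmaMap {α : Type} (lam : ℕ) (p : Set (TAtom α) × Set (TAtom α)) (τ : ℕ → ℕ) :
    TraceC α :=
  (fun k => {a | Sum.inl (a, k) ∈ p.1},
   fun k => {a | Sum.inl (a, k) ∈ p.2},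
   fun k => if k < lam then τ k else 0)

/-! ### Metric logic programs and the translation Π_λ -/

inductive BAtom (α : Type) : Type
  | atom : α → BAtom α
  | initB : BAtom α
  | finB : BAtom α

/-- A metric rule: either `□(α ← β)` or `□(○_[m,n) a ← β)`. -/
inductive MRule (α : Type) : Type
  | std : List α → List α → List (BAtom α) → List (BAtom α) → MRule α
  | nxt : ℕ → Option ℕ → α → List (BAtom α) → List (BAtom α) → MRule α

def bToM {α : Type} : BAtom α → MForm α
  | .atom a => .atom a
  | .initB => .init
  | .finB => mneg (.next 0 none mTop)

/-- The rule body as a metric formula. -/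
def MRule.mbody {α : Type} : MRule α → MForm α
  | .std _ _ bp bn =>
      .and (mconj (bp.map bToM)) (mconj (bn.map (fun b => mneg (bToM b))))
  | .nxt _ _ _ bp bn =>
      .and (mconj (bp.map bToM)) (mconj (bn.map (fun b => mneg (bToM b))))

/-- The rule (without the leading `□`) as a metric formula. -/
def MRule.toMForm {α : Type} : MRule α → MForm α
  | .std hp hn bp bn =>
      .imp (MRule.mbody (.std hp hn bp bn))
        (mdisj (hp.map MForm.atom ++ hn.map (fun a => mneg (MForm.atom a))))
  | .nxt m n a bp bn =>
      .imp (MRule.mbody (.nxt m n a bp bn)) (.next m n (.atom a))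

/-- `(H,T,τ)` is an MHT-model (of length `lam`) of program `P`. -/
def MHTModelP {α : Type} (lam : ℕ) (H T : ℕ → Set α) (τ : ℕ → ℕ)
    (P : Set (MRule α)) : Prop :=
  ∀ r ∈ P, ∀ k, k < lam → MSat lam H T τ k r.toMForm

/-- Metric equilibrium model `(⟨T,T⟩, τ)` of `P`. -/
def MetricEq {α : Type} (lam : ℕ) (T : ℕ → Set α) (τ : ℕ → ℕ)
    (P : Set (MRule α)) : Prop :=
  MHTModelP lam T T τ P ∧
  ∀ H : ℕ → Set α, (∀ k, H k ⊆ T k) → MHTModelP lam H T τ P → ∀ k, k < lam → H k = T k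

/-- Translation of body atoms at step `k`, with atoms embedded via `g : α × ℕ → β`. -/
def trB {α β : Type} (g : α × ℕ → β) (lam k : ℕ) : BAtom α → HTForm β
  | .atom a => .atom (g (a, k))
  | .initB => if k = 0 then hTop else .bot
  | .finB => if k = lam - 1 then hTop else .bot

def trBody {α β : Type} (g : α × ℕ → β) (lam k : ℕ) : MRule α → HTForm β
  | .std _ _ bp bn =>
      .and (hconj (bp.map (trB g lam k)))
           (hconj (bn.map (fun b => hneg (trB g lam k b))))
  | .nxt _ _ _ bp bn =>
      .and (hconj (bp.map (trB g lam k)))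
           (hconj (bn.map (fun b => hneg (trB g lam k b))))

/-- Translation `t_k(r)` of a metric rule at step `k`. -/
def trRule {α β : Type} (g : α × ℕ → β) (lam k : ℕ) : MRule α → HTForm β
  | .std hp hn bp bn =>
      .imp (trBody g lam k (.std hp hn bp bn))
        (hdisj (hp.map (fun a => HTForm.atom (g (a, k))) ++
                hn.map (fun a => hneg (HTForm.atom (g (a, k))))))
  | .nxt m n a bp bn =>
      .imp (trBody g lam k (.nxt m n a bp bn))
        (if k = lam - 1 then .bot else .atom (g (a, k + 1)))

/-- `Π_λ(P)`. -/
def PiT {α β : Type} (g : α × ℕ → β) (lam : ℕ) (P : Set (MRule α)) : Set (HTForm β) :=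
  {φ | ∃ r ∈ P, ∃ k, k < lam ∧ φ = trRule g lam k r}

/-! ### The Boolean constraint part Ψ_{λ,ν}(P) -/

def PsiB {α : Type} (lam ν : ℕ) (P : Set (MRule α)) : Set (HTForm (TAtom α)) :=
  {φ | ∃ m n a bp bn, MRule.nxt m n a bp bn ∈ P ∧
    ∃ k d d', k + 1 < lam ∧ d < d' ∧ d' ≤ ν ∧
      φ = .imp (.and (trBody Sum.inl lam k (.nxt m n a bp bn))
                 (.and (.atom (Sum.inr (k, d))) (.atom (Sum.inr (k + 1, d'))))) .bot ∧
      (d' - d < m ∨ ∃ n', n = some n' ∧ n' ≤ d' - d)}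

/-- θ on total timed traces, producing one set over `A* ∪ T`. -/
def thetaTot {α : Type} (lam : ℕ) (T : ℕ → Set α) (τ : ℕ → ℕ) : Set (TAtom α) :=
  {x | (∃ a k, k < lam ∧ a ∈ T k ∧ x = Sum.inl (a, k)) ∨
       (∃ k, k < lam ∧ x = Sum.inr (k, τ k))}

/-! ### HT_c over the mixed signature (Boolean atoms + integer timing variables) -/

inductive CForm2 (α : Type) : Type
  | bot : CForm2 α
  | batom : α × ℕ → CForm2 α
  | eqC : ℕ → ℕ → CForm2 α
  | diff : ℕ → ℕ → ℤ → CForm2 α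
  | and : CForm2 α → CForm2 α → CForm2 α
  | or : CForm2 α → CForm2 α → CForm2 α
  | imp : CForm2 α → CForm2 α → CForm2 α

/-- A valuation: Boolean part (atoms assigned `true`) and integer part. -/
abbrev CVal2 (α : Type) := Set (α × ℕ) × (ℕ → Option ℕ)

def CVal2Le {α : Type} (h t : CVal2 α) : Prop :=
  h.1 ⊆ t.1 ∧ ∀ x d, h.2 x = some d → t.2 x = some d

def CSat2 {α : Type} : CVal2 α → CVal2 α → CForm2 α → Prop
  | _, _, .bot => False
  | h, _, .batom p => p ∈ h.1
  | h, _, .eqC x d => h.2 x = some d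
  | h, _, .diff x y d => ∃ a b : ℕ, h.2 x = some a ∧ h.2 y = some b ∧ (a : ℤ) - b ≤ d
  | h, t, .and φ ψ => CSat2 h t φ ∧ CSat2 h t ψ
  | h, t, .or φ ψ => CSat2 h t φ ∨ CSat2 h t ψ
  | h, t, .imp φ ψ => (CSat2 h t φ → CSat2 h t ψ) ∧ (CSat2 t t φ → CSat2 t t ψ)

def CModel2 {α : Type} (h t : CVal2 α) (Γ : Set (CForm2 α)) : Prop :=
  ∀ φ ∈ Γ, CSat2 h t φ

/-- Constraint equilibrium model. -/
def CEqModel {α : Type} (t : CVal2 α) (Γ : Set (CForm2 α)) : Prop :=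
  CModel2 t t Γ ∧ ∀ h : CVal2 α, CVal2Le h t → CModel2 h t Γ → h = t

def cneg {α : Type} (φ : CForm2 α) : CForm2 α := .imp φ .bot

/-- Conversion of Boolean HT formulas over `α × ℕ` into mixed constraint formulas. -/
def toC2 {α : Type} : HTForm (α × ℕ) → CForm2 α
  | .bot => .bot
  | .atom p => .batom p
  | .and φ ψ => .and (toC2 φ) (toC2 ψ)
  | .or φ ψ => .or (toC2 φ) (toC2 ψ)
  | .imp φ ψ => .imp (toC2 φ) (toC2 ψ)

def PiC {α : Type} (lam : ℕ) (P : Set (MRule α)) : Set (CForm2 α) :=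
  toC2 '' PiT id lam P

def DeltaC2 {α : Type} (lam : ℕ) : Set (CForm2 α) :=
  {CForm2.eqC 0 0} ∪ {r | ∃ k, k + 1 < lam ∧ r = CForm2.diff k (k + 1) (-1)}

def PsiC {α : Type} (lam : ℕ) (P : Set (MRule α)) : Set (CForm2 α) :=
  {φ | ∃ m n a bp bn, MRule.nxt m n a bp bn ∈ P ∧ ∃ k, k + 1 < lam ∧
    (φ = .imp (.and (toC2 (trBody id lam k (.nxt m n a bp bn)))
               (cneg (.diff k (k + 1) (-(m : ℤ))))) .bot ∨
     ∃ n', n = some n' ∧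
       φ = .imp (.and (toC2 (trBody id lam k (.nxt m n a bp bn)))
                 (cneg (.diff (k + 1) k ((n' : ℤ) - 1)))) .bot)}

/-- θ^c on total timed traces. -/
def thetaC {α : Type} (lam : ℕ) (T : ℕ → Set α) (τ : ℕ → ℕ) : CVal2 α :=
  ({p | p.2 < lam ∧ p.1 ∈ T p.2}, fun k => if k < lam then some (τ k) else none)

section Helpers
variable {α β : Type}

lemma htsat_mono {H T : Set β} (hsub : H ⊆ T) :
    ∀ φ : HTForm β, HTSat H T φ → HTSat T T φ := by
  intro φ; induction φ with
  | bot => exact id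
  | atom a => exact fun h => hsub h
  | and φ ψ ihφ ihψ => exact fun h => ⟨ihφ h.1, ihψ h.2⟩
  | or φ ψ ihφ ihψ => exact fun h => h.elim (fun h => Or.inl (ihφ h)) (fun h => Or.inr (ihψ h))
  | imp φ ψ ihφ ihψ => exact fun h => ⟨h.2, h.2⟩

lemma hconj_sat (H T : Set β) (l : List (HTForm β)) :
    HTSat H T (hconj l) ↔ ∀ φ ∈ l, HTSat H T φ := by
  induction l with
  | nil => simp [hconj, hTop, hneg, HTSat]
  | cons a l ih => simp [hconj, HTSat] at ih ⊢; rw [ih]; simp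

lemma hdisj_sat (H T : Set β) (l : List (HTForm β)) :
    HTSat H T (hdisj l) ↔ ∃ φ ∈ l, HTSat H T φ := by
  induction l with
  | nil => simp [hdisj, HTSat]
  | cons a l ih => simp [hdisj, HTSat] at ih ⊢; rw [ih]

lemma mconj_sat (lam : ℕ) (H T : ℕ → Set α) (τ : ℕ → ℕ) (k : ℕ) (l : List (MForm α)) :
    MSat lam H T τ k (mconj l) ↔ ∀ φ ∈ l, MSat lam H T τ k φ := by
  induction l with
  | nil => simp [mconj, mTop, mneg, MSat]
  | cons a l ih => simp [mconj, MSat] at ih ⊢; rw [ih]; simp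

lemma mdisj_sat (lam : ℕ) (H T : ℕ → Set α) (τ : ℕ → ℕ) (k : ℕ) (l : List (MForm α)) :
    MSat lam H T τ k (mdisj l) ↔ ∃ φ ∈ l, MSat lam H T τ k φ := by
  induction l with
  | nil => simp [mdisj, MSat]
  | cons a l ih => simp [mdisj, MSat] at ih ⊢; rw [ih]

lemma mem_theta_inl (lam : ℕ) (T : ℕ → Set α) (τ : ℕ → ℕ) (a : α) (k : ℕ) :
    Sum.inl (a, k) ∈ thetaTot lam T τ ↔ k < lam ∧ a ∈ T k := by
  simp only [thetaTot, Set.mem_setOf_eq]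
  constructor
  · rintro (⟨a', k', hk', ha', heq⟩ | ⟨k', _, heq⟩)
    · cases heq; exact ⟨hk', ha'⟩
    · cases heq
  · rintro ⟨hk, ha⟩; exact Or.inl ⟨a, k, hk, ha, rfl⟩

lemma mem_theta_inr (lam : ℕ) (T : ℕ → Set α) (τ : ℕ → ℕ) (k d : ℕ) :
    Sum.inr (k, d) ∈ thetaTot lam T τ ↔ k < lam ∧ τ k = d := by
  simp only [thetaTot, Set.mem_setOf_eq]
  constructor
  · rintro (⟨a', k', _, _, heq⟩ | ⟨k', hk', heq⟩)
    · cases heq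
    · cases heq; exact ⟨hk', rfl⟩
  · rintro ⟨hk, hd⟩; exact Or.inr ⟨k, hk, by rw [hd]⟩

lemma timing_mono {lam : ℕ} {τ : ℕ → ℕ} (h : TimingFn lam τ) :
    ∀ i j, i ≤ j → j < lam → τ i ≤ τ j := by
  intro i j hij hj
  induction j with
  | zero => simp [Nat.le_zero.mp hij]
  | succ j ih =>
      rcases Nat.lt_or_ge i (j + 1) with h' | h'
      · exact le_trans (ih (by omega) (by omega)) (le_of_lt (h.2 j hj))
      · have : i = j + 1 := by omega
        simp [this]

lemma trB_corr (lam : ℕ) (T : ℕ → Set α) (τ : ℕ → ℕ)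
    (H : Set (TAtom α)) (Hf : ℕ → Set α)
    (agree : ∀ j a, j < lam → (Sum.inl (a, j) ∈ H ↔ a ∈ Hf j))
    (k : ℕ) (hk : k < lam) (b : BAtom α) :
    HTSat H (thetaTot lam T τ) (trB Sum.inl lam k b) ↔ MSat lam Hf T τ k (bToM b) := by
  cases b with
  | atom a => simpa [trB, bToM, HTSat, MSat] using agree k a hk
  | initB =>
      by_cases h0 : k = 0 <;> simp [trB, bToM, HTSat, MSat, h0, hTop, hneg]
  | finB =>
      by_cases h : k = lam - 1 <;>
        simp [trB, bToM, HTSat, MSat, mneg, mTop, inI, h, hTop, hneg] <;> omega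

end Helpers

section Corr
variable {α : Type}

lemma agreeT (lam : ℕ) (T : ℕ → Set α) (τ : ℕ → ℕ) :
    ∀ j a, j < lam → (Sum.inl (a, j) ∈ thetaTot lam T τ ↔ a ∈ T j) := by
  intro j a hj; rw [mem_theta_inl]; simp [hj]

lemma trBneg_corr (lam : ℕ) (T : ℕ → Set α) (τ : ℕ → ℕ)
    (H : Set (TAtom α)) (Hf : ℕ → Set α)
    (agree : ∀ j a, j < lam → (Sum.inl (a, j) ∈ H ↔ a ∈ Hf j))
    (k : ℕ) (hk : k < lam) (b : BAtom α) :
    HTSat H (thetaTot lam T τ) (hneg (trB Sum.inl lam k b)) ↔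
      MSat lam Hf T τ k (mneg (bToM b)) := by
  have h1 := trB_corr lam T τ H Hf agree k hk b
  have h2 := trB_corr lam T τ (thetaTot lam T τ) T (agreeT lam T τ) k hk b
  simp only [hneg, mneg, HTSat, MSat]
  rw [h1, h2]

lemma trBody_corr (lam : ℕ) (T : ℕ → Set α) (τ : ℕ → ℕ)
    (H : Set (TAtom α)) (Hf : ℕ → Set α)
    (agree : ∀ j a, j < lam → (Sum.inl (a, j) ∈ H ↔ a ∈ Hf j))
    (k : ℕ) (hk : k < lam) (r : MRule α) :
    HTSat H (thetaTot lam T τ) (trBody Sum.inl lam k r) ↔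
      MSat lam Hf T τ k r.mbody := by
  have key : ∀ bp bn : List (BAtom α),
      (HTSat H (thetaTot lam T τ)
        (.and (hconj (bp.map (trB Sum.inl lam k)))
              (hconj (bn.map (fun b => hneg (trB Sum.inl lam k b))))) ↔
       MSat lam Hf T τ k
        (.and (mconj (bp.map bToM)) (mconj (bn.map (fun b => mneg (bToM b)))))) := by
    intro bp bn
    simp only [HTSat, MSat, hconj_sat, mconj_sat, List.mem_map]
    constructor
    · rintro ⟨h1, h2⟩
      refine ⟨?_, ?_⟩
      · rintro φ ⟨b, hb, rfl⟩
        exact (trB_corr lam T τ H Hf agree k hk b).mp (h1 _ ⟨b, hb, rfl⟩)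
      · rintro φ ⟨b, hb, rfl⟩
        exact (trBneg_corr lam T τ H Hf agree k hk b).mp (h2 _ ⟨b, hb, rfl⟩)
    · rintro ⟨h1, h2⟩
      refine ⟨?_, ?_⟩
      · rintro φ ⟨b, hb, rfl⟩
        exact (trB_corr lam T τ H Hf agree k hk b).mpr (h1 _ ⟨b, hb, rfl⟩)
      · rintro φ ⟨b, hb, rfl⟩
        exact (trBneg_corr lam T τ H Hf agree k hk b).mpr (h2 _ ⟨b, hb, rfl⟩)
  cases r with
  | std hp hn bp bn => exact key bp bn
  | nxt m n a bp bn => exact key bp bn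

lemma trHead_corr (lam : ℕ) (T : ℕ → Set α) (τ : ℕ → ℕ)
    (H : Set (TAtom α)) (Hf : ℕ → Set α)
    (agree : ∀ j a, j < lam → (Sum.inl (a, j) ∈ H ↔ a ∈ Hf j))
    (k : ℕ) (hk : k < lam) (hp hn : List α) :
    HTSat H (thetaTot lam T τ)
      (hdisj (hp.map (fun a => HTForm.atom (Sum.inl (a, k))) ++
              hn.map (fun a => hneg (HTForm.atom (Sum.inl (a, k)))))) ↔
    MSat lam Hf T τ k
      (mdisj (hp.map MForm.atom ++ hn.map (fun a => mneg (MForm.atom a)))) := by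
  rw [hdisj_sat, mdisj_sat]
  simp only [List.mem_append, List.mem_map]
  constructor
  · rintro ⟨φ, (⟨a, ha, rfl⟩ | ⟨a, ha, rfl⟩), hφ⟩
    · exact ⟨_, Or.inl ⟨a, ha, rfl⟩, by
        simpa [MSat] using (agree k a hk).mp (by simpa [HTSat] using hφ)⟩
    · refine ⟨_, Or.inr ⟨a, ha, rfl⟩, ?_⟩
      simp only [hneg, HTSat] at hφ
      simp only [mneg, MSat]
      exact ⟨fun h => hφ.1 ((agree k a hk).mpr h),
             fun h => hφ.2 ((agreeT lam T τ k a hk).mpr h)⟩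
  · rintro ⟨φ, (⟨a, ha, rfl⟩ | ⟨a, ha, rfl⟩), hφ⟩
    · exact ⟨_, Or.inl ⟨a, ha, rfl⟩, by
        simpa [HTSat] using (agree k a hk).mpr (by simpa [MSat] using hφ)⟩
    · refine ⟨_, Or.inr ⟨a, ha, rfl⟩, ?_⟩
      simp only [mneg, MSat] at hφ
      simp only [hneg, HTSat]
      exact ⟨fun h => hφ.1 ((agree k a hk).mp h),
             fun h => hφ.2 ((agreeT lam T τ k a hk).mp h)⟩

end Corr

/-- Theorem 1 (Completeness of the Boolean translation). -/
theorem boolean_translation_complete {α : Type} (lam ν : ℕ) (hlam : 1 ≤ lam)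
    (P : Set (MRule α)) (T : ℕ → Set α) (τ : ℕ → ℕ)
    (hτ : TimingFn lam τ) (hν : ν = τ (lam - 1))
    (hme : MetricEq lam T τ P) :
    EqModel (thetaTot lam T τ)
      (PiT Sum.inl lam P ∪ DeltaB Sum.inr lam ν ∪ PsiB lam ν P) := by
  set Θ := thetaTot lam T τ with hΘ
  have agT := agreeT lam T τ
  -- Part 1: Θ is a total model
  have htot : HTModel Θ Θ (PiT Sum.inl lam P ∪ DeltaB Sum.inr lam ν ∪ PsiB lam ν P) := by
    rintro φ ((hφ | hφ) | hφ)
    · -- PiT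
      obtain ⟨r, hr, k, hk, rfl⟩ := hφ
      have hms := hme.1 r hr k hk
      cases r with
      | std hp hn bp bn =>
          have claim : HTSat Θ Θ (trBody Sum.inl lam k (.std hp hn bp bn)) →
              HTSat Θ Θ (hdisj (hp.map (fun a => HTForm.atom (Sum.inl (a, k))) ++
                hn.map (fun a => hneg (HTForm.atom (Sum.inl (a, k)))))) := by
            intro hb
            have hmb := (trBody_corr lam T τ Θ T agT k hk _).mp hb
            simp only [MRule.toMForm, MSat] at hms
            exact (trHead_corr lam T τ Θ T agT k hk hp hn).mpr (hms.1 hmb)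
          exact ⟨claim, claim⟩
      | nxt m n a bp bn =>
          have claim : HTSat Θ Θ (trBody Sum.inl lam k (.nxt m n a bp bn)) →
              HTSat Θ Θ (if k = lam - 1 then .bot else .atom (Sum.inl (a, k + 1))) := by
            intro hb
            have hmb := (trBody_corr lam T τ Θ T agT k hk _).mp hb
            simp only [MRule.toMForm, MSat] at hms
            obtain ⟨hk1, ha, _⟩ := hms.1 hmb
            rw [if_neg (by omega)]
            show Sum.inl (a, k + 1) ∈ Θ
            exact (mem_theta_inl lam T τ a (k + 1)).mpr ⟨hk1, ha⟩
          exact ⟨claim, claim⟩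
    · -- DeltaB
      rcases hφ with hφ | ⟨k, d, hk1, hd, rfl⟩
      · rcases hφ with rfl
        show Sum.inr (0, 0) ∈ Θ
        exact (mem_theta_inr lam T τ 0 0).mpr ⟨by omega, hτ.1⟩
      · have claim : HTSat Θ Θ (.atom (Sum.inr (k, d))) →
            HTSat Θ Θ (hdisj (((List.range (ν + 1)).filter (fun d' => decide (d < d'))).map
              (fun d' => .atom (Sum.inr (k + 1, d'))))) := by
          intro ht
          have hd' : τ k = d := ((mem_theta_inr lam T τ k d).mp ht).2
          have hlt : d < τ (k + 1) := hd' ▸ hτ.2 k hk1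
          have hle : τ (k + 1) ≤ ν := by
            rw [hν]; exact timing_mono hτ (k + 1) (lam - 1) (by omega) (by omega)
          rw [hdisj_sat]
          refine ⟨.atom (Sum.inr (k + 1, τ (k + 1))), ?_, ?_⟩
          · exact List.mem_map.mpr ⟨τ (k + 1), by
              simp [List.mem_filter, List.mem_range]; omega, rfl⟩
          · exact (mem_theta_inr lam T τ (k + 1) (τ (k + 1))).mpr ⟨by omega, rfl⟩
        exact ⟨claim, claim⟩
    · -- PsiB
      obtain ⟨m, n, a, bp, bn, hrP, k, d, d', hk1, hdd', hd'ν, rfl, hbad⟩ := hφ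
      have claim : HTSat Θ Θ (.and (trBody Sum.inl lam k (.nxt m n a bp bn))
          (.and (.atom (Sum.inr (k, d))) (.atom (Sum.inr (k + 1, d'))))) → False := by
        rintro ⟨hb, ht, ht'⟩
        have hd : τ k = d := ((mem_theta_inr lam T τ k d).mp ht).2
        have hd' : τ (k + 1) = d' := ((mem_theta_inr lam T τ (k + 1) d').mp ht').2
        have hmb := (trBody_corr lam T τ Θ T agT k (by omega) _).mp hb
        have hms := hme.1 _ hrP k (by omega)
        simp only [MRule.toMForm, MSat] at hms
        obtain ⟨_, _, hin⟩ := hms.1 hmb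
        obtain ⟨hge, hub⟩ := hin
        rcases hbad with hlt | ⟨n', rfl, hn'⟩
        · omega
        · have := hub n' rfl; omega
      exact ⟨claim, claim⟩
  refine ⟨htot, ?_⟩
  -- Part 2: minimality
  intro H hsub hmodel
  set Hf : ℕ → Set α := fun j => {a | Sum.inl (a, j) ∈ H} with hHf
  have agree : ∀ j a, j < lam → (Sum.inl (a, j) ∈ H ↔ a ∈ Hf j) := fun j a _ => Iff.rfl
  have hHfT : ∀ j, Hf j ⊆ T j := by
    intro j a ha
    exact ((mem_theta_inl lam T τ a j).mp (hsub ha)).2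
  have hMHT : MHTModelP lam Hf T τ P := by
    intro r hr k hk
    have hms := hme.1 r hr k hk
    have hHT := hmodel (trRule Sum.inl lam k r) (Or.inl (Or.inl ⟨r, hr, k, hk, rfl⟩))
    cases r with
    | std hp hn bp bn =>
        simp only [MRule.toMForm, MSat] at hms ⊢
        refine ⟨?_, hms.2⟩
        intro hb
        have hbHT := (trBody_corr lam T τ H Hf agree k hk (.std hp hn bp bn)).mpr hb
        exact (trHead_corr lam T τ H Hf agree k hk hp hn).mp (hHT.1 hbHT)
    | nxt m n a bp bn =>
        simp only [MRule.toMForm, MSat] at hms ⊢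
        refine ⟨?_, hms.2⟩
        intro hb
        have hbHT := (trBody_corr lam T τ H Hf agree k hk (.nxt m n a bp bn)).mpr hb
        have hhead := hHT.1 hbHT
        by_cases hkl : k = lam - 1
        · rw [if_pos hkl] at hhead; exact absurd hhead id
        · rw [if_neg hkl] at hhead
          have hk1 : k + 1 < lam := by omega
          refine ⟨hk1, hhead, ?_⟩
          by_contra hnin
          have hbΘ : HTSat Θ Θ (trBody Sum.inl lam k (.nxt m n a bp bn)) :=
            htsat_mono hsub _ hbHT
          set dd := τ k
          set dd' := τ (k + 1) with hdd'
          have hlt : dd < dd' := hτ.2 k hk1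
          have hle : dd' ≤ ν := by
            rw [hν]; exact timing_mono hτ (k + 1) (lam - 1) (by omega) (by omega)
          have hbad : dd' - dd < m ∨ ∃ n', n = some n' ∧ n' ≤ dd' - dd := by
            by_contra hc
            push_neg at hc
            exact hnin ⟨by omega, fun n' hn' => by
              rcases Nat.lt_or_ge (dd' - dd) n' with h | h
              · exact h
              · exact absurd h (by have := hc.2 n' hn'; omega)⟩
          have hmem : (HTForm.imp (.and (trBody Sum.inl lam k (.nxt m n a bp bn))
              (.and (.atom (Sum.inr (k, dd))) (.atom (Sum.inr (k + 1, dd'))))) .bot) ∈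
              (PiT Sum.inl lam P ∪ DeltaB Sum.inr lam ν ∪ PsiB lam ν P) :=
            Or.inr ⟨m, n, a, bp, bn, hr, k, dd, dd', hk1, hlt, hle, rfl, hbad⟩
          have hc := htot _ hmem
          exact hc.1 ⟨hbΘ, (mem_theta_inr lam T τ k dd).mpr ⟨hk, rfl⟩,
            (mem_theta_inr lam T τ (k + 1) dd').mpr ⟨hk1, rfl⟩⟩
  have heq := hme.2 Hf hHfT hMHT
  have tclaim : ∀ k, k < lam → Sum.inr (k, τ k) ∈ H := by
    intro k
    induction k with
    | zero =>
        intro _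
        have := hmodel (.atom (Sum.inr (0, 0))) (Or.inl (Or.inr (Or.inl rfl)))
        rw [hτ.1]
        exact this
    | succ k ih =>
        intro hk1
        have hk : k < lam := by omega
        have hkd : τ k ≤ ν := by
          rw [hν]; exact timing_mono hτ k (lam - 1) (by omega) (by omega)
        have hrule := hmodel (deltaRule Sum.inr k (τ k) ν)
          (Or.inl (Or.inr (Or.inr ⟨k, τ k, hk1, hkd, rfl⟩)))
        have hdis := hrule.1 (ih hk)
        rw [hdisj_sat] at hdis
        obtain ⟨φ, hmem, hsat⟩ := hdis
        obtain ⟨d', _, rfl⟩ := List.mem_map.mp hmem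
        have hd' : τ (k + 1) = d' :=
          ((mem_theta_inr lam T τ (k + 1) d').mp (hsub hsat)).2
        rw [hd']
        exact hsat
  ext x
  constructor
  · exact fun hx => hsub hx
  · intro hx
    rcases hx with ⟨a, k, hk, ha, rfl⟩ | ⟨k, hk, rfl⟩
    · show Sum.inl (a, k) ∈ H
      have : a ∈ Hf k := (heq k hk) ▸ ha
      exact this
    · exact tclaim k hk
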